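/- arXiv:2605.24427 — 5 statements merged into one kernel-verified Lean document; each statement's English description precedes it below -/
import Mathlib

section
/- Glennie's identity G₉ holds in every associative ring in which 2 is invertible: for all x, y, z, one has H₉(x,y,z) = H₉(y,x,z), where H₉(x,y,z) := 2·(U_x(z)) ∘ (U_{y,x}(U_z(y²))) − U_x(U_z(U_{x,y}(U_y(z)))); here U_x(z) = x*z*x, U_z(y²) = z*y²*z, U_{y,x}(c) = (1/2)(y*c*x + x*c*y), U_y(z) = y*z*y, and U_{x,y}(c) = (1/2)(x*c*y + y*c*x). -/
/-- The Jordan product `a ∘ b = ½(ab + ba)` in an associative ring with `2` invertible. -/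
def jordanMul {R : Type*} [Ring R] [Invertible (2 : R)] (a b : R) : R :=
  ⅟(2 : R) * (a * b + b * a)

/-- The quadratic map `U_a(b) = a b a`. -/
def Uop {R : Type*} [Ring R] (a b : R) : R := a * b * a

/-- The polarized quadratic map `U_{a,b}(c) = ½(acb + bca)`. -/
def Upair {R : Type*} [Ring R] [Invertible (2 : R)] (a b c : R) : R :=
  ⅟(2 : R) * (a * c * b + b * c * a)

/-- `H₉(x,y,z) = 2·(U_x z) ∘ (U_{y,x} U_z (y²)) − U_x U_z U_{x,y} U_y (z)`. -/
def H9 {R : Type*} [Ring R] [Invertible (2 : R)] (x y z : R) : R :=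
  2 * jordanMul (Uop x z) (Upair y x (Uop z (y * y)))
    - Uop x (Uop z (Upair x y (Uop y z)))

/-- Glennie's identity `G₉` holds in every associative ring in which `2` is invertible:
`H₉(x,y,z) = H₉(y,x,z)`. -/
theorem glennie_G9 {R : Type*} [Ring R] [Invertible (2 : R)] (x y z : R) :
    H9 x y z = H9 y x z := by
  have hc : ∀ a : R, Commute (⅟(2 : R)) a := fun a => by
    have h : Commute (2 : R) a := by
      unfold Commute SemiconjBy
      rw [two_mul, mul_two]
    exact h.invOf_left
  have hcomm : ∀ a b : R, a * (⅟(2 : R) * b) = ⅟(2 : R) * (a * b) := fun a b => by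
    rw [← mul_assoc, ← (hc a).eq, mul_assoc]
  have h2 : ∀ c : R, (2 : R) * (⅟(2 : R) * c) = c := fun c => by
    rw [← mul_assoc, mul_invOf_self, one_mul]
  unfold H9 jordanMul Uop Upair
  simp only [mul_assoc]
  simp only [hcomm]
  simp only [← mul_add]
  simp only [h2]
  rw [← mul_sub, ← mul_sub]
  congr 1
  noncomm_ring
end

section
/- Let S be a set and let H := ℓ²(FreeMonoid S, ℝ) be the real Hilbert space of square-summable real families indexed by finite words in S, with orthonormal basis (δ_w) indexed by words w. For each s ∈ S let ℓ_s : H → H be the bounded linear operator determined by ℓ_s(δ_w) = δ_{s·w} (prepending the letter s). Then there exists an ℝ-algebra homomorphism φ from the free unital associative real algebra on S (FreeAlgebra ℝ S) to the algebra of bounded linear operators on H such that φ(X_s) = ℓ_s + ℓ_s* for every generator X_s, every φ(X_s) is a self-adjoint operator, and φ is injective. -/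
noncomputable instance (S : Type*) : DecidableEq (FreeMonoid S) := Classical.decEq _

open Function
open scoped ENNReal

namespace FreeRepAux

variable {α β : Type*} [DecidableEq α] [DecidableEq β] {j : α → β}

lemma extend_norm_rpow (hj : Function.Injective j) (f : α → ℝ) {t : ℝ} (ht : t ≠ 0) :
    (fun b => ‖Function.extend j f 0 b‖ ^ t) =
      Function.extend j (fun a => ‖f a‖ ^ t) 0 := by
  funext b
  by_cases hb : ∃ a, j a = b
  · obtain ⟨a, rfl⟩ := hb
    rw [hj.extend_apply, hj.extend_apply]
  · rw [Function.extend_apply' _ _ _ hb, Function.extend_apply' _ _ _ hb]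
    simp [Real.zero_rpow ht]

lemma memℓp_extend (hj : Function.Injective j) (f : lp (fun _ : α => ℝ) 2) :
    Memℓp (Function.extend j (⇑f) 0) 2 := by
  have hp : (0 : ℝ) < (2 : ℝ≥0∞).toReal := by norm_num
  apply memℓp_gen
  rw [extend_norm_rpow hj _ hp.ne']
  rw [summable_extend_zero hj]
  exact (memℓp_gen_iff hp).1 (lp.memℓp f)

/-- The linear map extending a family along an injection, as a map of `ℓ²` spaces. -/
noncomputable def extendL (hj : Function.Injective j) :
    lp (fun _ : α => ℝ) 2 →ₗ[ℝ] lp (fun _ : β => ℝ) 2 where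
  toFun f := ⟨Function.extend j (⇑f) 0, memℓp_extend hj f⟩
  map_add' f g := by
    ext b
    by_cases hb : ∃ a, j a = b
    · obtain ⟨a, rfl⟩ := hb
      simp only [lp.coeFn_add, Pi.add_apply]
      rw [hj.extend_apply]
      have h1 : (Function.extend j (⇑f) 0) (j a) = f a := hj.extend_apply _ _ _
      have h2 : (Function.extend j (⇑g) 0) (j a) = g a := hj.extend_apply _ _ _
      have := hj.extend_apply (g := (⇑(f + g) : α → ℝ)) (e' := (0 : β → ℝ)) a
      simp only [lp.coeFn_add, Pi.add_apply] at this ⊢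
      exact h1 ▸ h2 ▸ rfl
    · have h1 : (Function.extend j (⇑f) 0) b = 0 := by
        rw [Function.extend_apply' _ _ _ hb]; rfl
      have h2 : (Function.extend j (⇑g) 0) b = 0 := by
        rw [Function.extend_apply' _ _ _ hb]; rfl
      have h3 : (Function.extend j (⇑(f + g)) 0) b = 0 := by
        rw [Function.extend_apply' _ _ _ hb]; rfl
      show (Function.extend j (⇑(f + g)) 0) b
          = (⟨_, memℓp_extend hj f⟩ + ⟨_, memℓp_extend hj g⟩ :
              lp (fun _ : β => ℝ) 2) b
      rw [h3, lp.coeFn_add, Pi.add_apply]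
      show (0 : ℝ) = (Function.extend j (⇑f) 0) b + (Function.extend j (⇑g) 0) b
      rw [h1, h2, add_zero]
  map_smul' c f := by
    ext b
    by_cases hb : ∃ a, j a = b
    · obtain ⟨a, rfl⟩ := hb
      show (Function.extend j (⇑(c • f)) 0) (j a)
          = (c • (⟨_, memℓp_extend hj f⟩ : lp (fun _ : β => ℝ) 2)) (j a)
      rw [hj.extend_apply, lp.coeFn_smul, Pi.smul_apply]
      show (c • f) a = c • (Function.extend j (⇑f) 0) (j a)
      rw [hj.extend_apply, lp.coeFn_smul, Pi.smul_apply]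
    · show (Function.extend j (⇑(c • f)) 0) b
          = (c • (⟨_, memℓp_extend hj f⟩ : lp (fun _ : β => ℝ) 2)) b
      rw [Function.extend_apply' _ _ _ hb, lp.coeFn_smul, Pi.smul_apply]
      show (0 : ℝ) = c • (Function.extend j (⇑f) 0) b
      rw [Function.extend_apply' _ _ _ hb]
      show (0 : ℝ) = c • (0 : ℝ)
      rw [smul_zero]

lemma norm_extendL (hj : Function.Injective j) (f : lp (fun _ : α => ℝ) 2) :
    ‖extendL hj f‖ = ‖f‖ := by
  have hp : (0 : ℝ) < (2 : ℝ≥0∞).toReal := by norm_num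
  rw [lp.norm_eq_tsum_rpow hp, lp.norm_eq_tsum_rpow hp]
  congr 1
  have : (fun b => ‖(extendL hj f) b‖ ^ (2 : ℝ≥0∞).toReal)
      = Function.extend j (fun a => ‖f a‖ ^ (2 : ℝ≥0∞).toReal) 0 :=
    extend_norm_rpow hj _ hp.ne'
  rw [this, tsum_extend_zero hj]

/-- The bounded operator extending a family along an injection, on `ℓ²` spaces. -/
noncomputable def extendCLM (hj : Function.Injective j) :
    lp (fun _ : α => ℝ) 2 →L[ℝ] lp (fun _ : β => ℝ) 2 :=
  (extendL hj).mkContinuous 1 fun f => by rw [norm_extendL hj f, one_mul]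

lemma extendCLM_apply_of (hj : Function.Injective j) (f : lp (fun _ : α => ℝ) 2) (a : α) :
    extendCLM hj f (j a) = f a := hj.extend_apply _ _ _

lemma extendCLM_apply_not (hj : Function.Injective j) (f : lp (fun _ : α => ℝ) 2) {b : β}
    (hb : ¬∃ a, j a = b) : extendCLM hj f b = 0 := by
  show (Function.extend j (⇑f) 0) b = 0
  rw [Function.extend_apply' _ _ _ hb]; rfl

lemma extendCLM_single (hj : Function.Injective j) (u : α) :
    extendCLM hj (lp.single 2 u (1 : ℝ)) = lp.single 2 (j u) (1 : ℝ) := by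
  ext b
  by_cases hb : ∃ a, j a = b
  · obtain ⟨a, rfl⟩ := hb
    rw [extendCLM_apply_of hj]
    rw [lp.single_apply, lp.single_apply]
    by_cases hau : a = u
    · subst hau; rw [Pi.single_eq_same, Pi.single_eq_same]
    · rw [Pi.single_eq_of_ne hau, Pi.single_eq_of_ne (fun h => hau (hj h))]
  · rw [extendCLM_apply_not hj _ hb]
    rw [lp.single_apply, Pi.single_eq_of_ne (fun h : b = j u => hb ⟨u, h.symm⟩)]

lemma apply_eq_inner_single (f : lp (fun _ : α => ℝ) 2) (u : α) :
    f u = @inner ℝ _ _ (lp.single 2 u (1 : ℝ)) f := by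
  rw [lp.inner_single_left]
  simp

lemma adjoint_extendCLM_apply (hj : Function.Injective j) (g : lp (fun _ : β => ℝ) 2) (u : α) :
    (ContinuousLinearMap.adjoint (extendCLM hj)) g u = g (j u) := by
  rw [apply_eq_inner_single, ContinuousLinearMap.adjoint_inner_right,
    extendCLM_single hj, ← apply_eq_inner_single]

end FreeRepAux

open FreeRepAux

section Main

variable {S : Type*}

local notation "H" => lp (fun _ : FreeMonoid S => ℝ) 2

lemma freeMonoid_mul_left_injective (s : S) :
    Function.Injective (fun w : FreeMonoid S => FreeMonoid.of s * w) :=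
  fun _ _ h => mul_left_cancel h

/-- The left creation operator `ℓ_s`. -/
noncomputable def creation (s : S) : H →L[ℝ] H :=
  extendCLM (freeMonoid_mul_left_injective s)

lemma creation_single (s : S) (w : FreeMonoid S) :
    creation s (lp.single 2 w (1 : ℝ)) = lp.single 2 (FreeMonoid.of s * w) (1 : ℝ) :=
  extendCLM_single _ w

/-- The representation `φ` of the free algebra. -/
noncomputable def freeRep (S : Type*) :
    FreeAlgebra ℝ S →ₐ[ℝ]
      (lp (fun _ : FreeMonoid S => ℝ) 2 →L[ℝ] lp (fun _ : FreeMonoid S => ℝ) 2) :=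
  FreeAlgebra.lift ℝ fun s => creation s + ContinuousLinearMap.adjoint (creation s)

lemma freeRep_ι (s : S) :
    freeRep S (FreeAlgebra.ι ℝ s) = creation s + ContinuousLinearMap.adjoint (creation s) :=
  FreeAlgebra.lift_ι_apply _ _

/-- Monomial basis vectors of the free algebra. -/
noncomputable abbrev fbasis (S : Type*) : Module.Basis (FreeMonoid S) ℝ (FreeAlgebra ℝ S) :=
  FreeAlgebra.basisFreeMonoid ℝ S

lemma fbasis_apply (w : FreeMonoid S) :
    fbasis S w = (FreeAlgebra.equivMonoidAlgebraFreeMonoid (R := ℝ) (X := S)).symm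
      (MonoidAlgebra.single w (1 : ℝ)) := by
  have h0 : fbasis S w = ((FreeAlgebra.equivMonoidAlgebraFreeMonoid (R := ℝ) (X := S)).toLinearEquiv.trans
      (MonoidAlgebra.coeffLinearEquiv _)).symm (Finsupp.single w 1) := by
    unfold fbasis FreeAlgebra.basisFreeMonoid
    rw [Module.Basis.map_apply, Finsupp.coe_basisSingleOne]
  rw [h0]
  rfl

lemma fbasis_one : fbasis S 1 = 1 := by
  rw [fbasis_apply]
  have : (MonoidAlgebra.single (1 : FreeMonoid S) (1 : ℝ)) = (1 : MonoidAlgebra ℝ (FreeMonoid S)) :=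
    rfl
  rw [this, map_one]

lemma equiv_ι (s : S) :
    (FreeAlgebra.equivMonoidAlgebraFreeMonoid (R := ℝ) (X := S)) (FreeAlgebra.ι ℝ s)
      = MonoidAlgebra.single (FreeMonoid.of s) (1 : ℝ) := by
  show (FreeAlgebra.lift ℝ fun x => (MonoidAlgebra.of ℝ (FreeMonoid S)) (FreeMonoid.of x))
      (FreeAlgebra.ι ℝ s) = _
  rw [FreeAlgebra.lift_ι_apply]
  rfl

lemma fbasis_cons (s : S) (w : FreeMonoid S) :
    fbasis S (FreeMonoid.of s * w) = FreeAlgebra.ι ℝ s * fbasis S w := by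
  rw [fbasis_apply, fbasis_apply]
  have h : (MonoidAlgebra.single (FreeMonoid.of s * w) (1 : ℝ) : MonoidAlgebra ℝ (FreeMonoid S))
      = MonoidAlgebra.single (FreeMonoid.of s) (1 : ℝ) * MonoidAlgebra.single w (1 : ℝ) := by
    rw [MonoidAlgebra.single_mul_single, one_mul]
  rw [h, map_mul]
  congr 1
  rw [← equiv_ι s, AlgEquiv.symm_apply_apply]

/-- The vacuum vector `δ_1`. -/
noncomputable def vac (S : Type*) : lp (fun _ : FreeMonoid S => ℝ) 2 :=
  lp.single 2 (1 : FreeMonoid S) (1 : ℝ)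

lemma key (w : FreeMonoid S) :
    ∀ u : FreeMonoid S, w.length ≤ u.length →
      (freeRep S (fbasis S w) (vac S)) u = if u = w then 1 else 0 := by
  induction w using FreeMonoid.recOn with
  | one =>
    intro u _
    rw [fbasis_one, map_one]
    show (vac S) u = _
    rw [vac, lp.single_apply]
    by_cases h : u = 1
    · subst h; rw [Pi.single_eq_same, if_pos rfl]
    · rw [Pi.single_eq_of_ne h, if_neg h]
  | of_mul s w ih =>
    intro u hu
    rw [fbasis_cons, map_mul, freeRep_ι, ContinuousLinearMap.mul_apply,
      ContinuousLinearMap.add_apply, lp.coeFn_add, Pi.add_apply]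
    set v := freeRep S (fbasis S w) (vac S) with hv
    have hlen : (FreeMonoid.of s * w).length = w.length + 1 := by
      rw [FreeMonoid.length_mul, FreeMonoid.length_of, add_comm]
    by_cases hb : ∃ u', FreeMonoid.of s * u' = u
    · obtain ⟨u', rfl⟩ := hb
      have hu'len : (FreeMonoid.of s * u').length = u'.length + 1 := by
        rw [FreeMonoid.length_mul, FreeMonoid.length_of, add_comm]
      have hwu' : w.length ≤ u'.length := by omega
      have h1 : creation s v (FreeMonoid.of s * u') = v u' :=
        extendCLM_apply_of (freeMonoid_mul_left_injective s) v u'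
      have h2 : (ContinuousLinearMap.adjoint (creation s)) v (FreeMonoid.of s * u')
          = v (FreeMonoid.of s * (FreeMonoid.of s * u')) :=
        adjoint_extendCLM_apply (freeMonoid_mul_left_injective s) v _
      rw [h1, h2]
      have h3 : v (FreeMonoid.of s * (FreeMonoid.of s * u')) = 0 := by
        rw [ih _ (by
          rw [FreeMonoid.length_mul, FreeMonoid.length_of]; omega)]
        rw [if_neg]
        intro hcontra
        have := congr_arg FreeMonoid.length hcontra
        rw [FreeMonoid.length_mul, FreeMonoid.length_of] at this
        omega
      rw [h3, add_zero, ih _ hwu']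
      by_cases h4 : u' = w
      · subst h4; rw [if_pos rfl, if_pos rfl]
      · rw [if_neg h4, if_neg (fun h => h4 (mul_left_cancel h))]
    · have h1 : creation s v u = 0 :=
        extendCLM_apply_not (freeMonoid_mul_left_injective s) v hb
      have h2 : (ContinuousLinearMap.adjoint (creation s)) v u
          = v (FreeMonoid.of s * u) :=
        adjoint_extendCLM_apply (freeMonoid_mul_left_injective s) v _
      rw [h1, h2, zero_add]
      have h3 : v (FreeMonoid.of s * u) = 0 := by
        rw [ih _ (by rw [FreeMonoid.length_mul, FreeMonoid.length_of]; omega)]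
        rw [if_neg]
        intro hcontra
        have := congr_arg FreeMonoid.length hcontra
        rw [FreeMonoid.length_mul, FreeMonoid.length_of] at this
        omega
      rw [h3, if_neg (fun h => hb ⟨w, h.symm⟩)]

lemma freeRep_injective : Function.Injective (freeRep S) := by
  rw [injective_iff_map_eq_zero]
  intro a ha
  by_contra hne
  set r := (fbasis S).repr a with hr
  have hrne : r ≠ 0 := fun h => hne ((fbasis S).repr.map_eq_zero_iff.1 h)
  have hsupp : r.support.Nonempty := Finsupp.support_nonempty_iff.2 hrne
  obtain ⟨w0, hw0, hmax⟩ := Finset.exists_max_image r.support (fun w => w.length) hsupp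
  have hsum : a = ∑ w ∈ r.support, r w • fbasis S w := by
    conv_lhs => rw [← (fbasis S).linearCombination_repr a]
    rw [Finsupp.linearCombination_apply, Finsupp.sum]
  have happ : freeRep S a (vac S) = ∑ w ∈ r.support, r w • (freeRep S (fbasis S w) (vac S)) := by
    rw [hsum, map_sum]
    rw [ContinuousLinearMap.sum_apply]
    congr 1
    funext w
    rw [map_smul, ContinuousLinearMap.smul_apply]
  have heval : (freeRep S a (vac S)) w0 = r w0 := by
    rw [happ, lp.coeFn_sum, Finset.sum_apply]
    have : ∀ w ∈ r.support, (r w • (freeRep S (fbasis S w) (vac S))) w0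
        = if w = w0 then r w0 else 0 := by
      intro w hw
      rw [lp.coeFn_smul, Pi.smul_apply, key w w0 (hmax w hw)]
      by_cases h : w = w0
      · subst h; rw [if_pos rfl, if_pos rfl, smul_eq_mul, mul_one]
      · rw [if_neg (fun hh => h hh.symm), smul_zero, if_neg h]
    rw [Finset.sum_congr rfl this, Finset.sum_ite_eq' r.support w0 (fun _ => r w0),
      if_pos hw0]
  rw [ha] at heval
  simp only [ContinuousLinearMap.zero_apply] at heval
  have : r w0 = 0 := by
    rw [← heval]
    rfl
  exact Finsupp.mem_support_iff.1 hw0 this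

end Main

/-- The free unital associative real algebra on a set `S` embeds into the bounded operators
on the real Hilbert space `ℓ²(FreeMonoid S, ℝ)`: there are bounded operators `ℓ_s` with
`ℓ_s δ_w = δ_{s·w}`, and an injective `ℝ`-algebra homomorphism `φ` sending each generator
`X_s` to the self-adjoint operator `ℓ_s + ℓ_s*`. -/
theorem freeAlgebra_selfAdjoint_representation (S : Type*) :
    ∃ ℓ : S → (lp (fun _ : FreeMonoid S => ℝ) 2 →L[ℝ] lp (fun _ : FreeMonoid S => ℝ) 2),
      (∀ (s : S) (w : FreeMonoid S),
        ℓ s (lp.single 2 w (1 : ℝ)) = lp.single 2 (FreeMonoid.of s * w) (1 : ℝ)) ∧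
      ∃ φ : FreeAlgebra ℝ S →ₐ[ℝ]
          (lp (fun _ : FreeMonoid S => ℝ) 2 →L[ℝ] lp (fun _ : FreeMonoid S => ℝ) 2),
        (∀ s : S, φ (FreeAlgebra.ι ℝ s) = ℓ s + ContinuousLinearMap.adjoint (ℓ s)) ∧
        (∀ s : S, IsSelfAdjoint (φ (FreeAlgebra.ι ℝ s))) ∧
        Function.Injective φ := by
  refine ⟨creation, creation_single, freeRep S, freeRep_ι, ?_, freeRep_injective⟩
  intro s
  rw [freeRep_ι]
  rw [IsSelfAdjoint, star_add, ContinuousLinearMap.star_eq_adjoint,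
    ContinuousLinearMap.star_eq_adjoint, ContinuousLinearMap.adjoint_adjoint, add_comm]
end

section
/- Let S be a set, H := ℓ²(FreeMonoid S, ℝ), and for each s ∈ S let ℓ_s : H → H be the bounded linear operator determined by ℓ_s(δ_w) = δ_{s·w} on the orthonormal basis (δ_w) indexed by words. Let φ be the unique ℝ-algebra homomorphism from FreeAlgebra ℝ S to bounded operators on H with φ(X_s) = ℓ_s + ℓ_s* for all s ∈ S. Then for every nonzero element G of FreeAlgebra ℝ S, the vector φ(G)(δ_ε) is nonzero, where δ_ε is the basis vector at the empty word; in particular φ is injective. -/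
open RealInnerProductSpace

set_option maxHeartbeats 1000000 in
/-- Let `ℓ_s` be the bounded operators on `ℓ²(FreeMonoid S, ℝ)` with `ℓ_s δ_w = δ_{s·w}`,
and let `φ` be the unique `ℝ`-algebra homomorphism on the free algebra with
`φ(X_s) = ℓ_s + ℓ_s*`.  Then `φ(G) δ_ε ≠ 0` for every nonzero `G`; in particular `φ`
is injective. -/
theorem freeAlgebra_representation_injective (S : Type*)
    (ℓ : S → (lp (fun _ : FreeMonoid S => ℝ) 2 →L[ℝ] lp (fun _ : FreeMonoid S => ℝ) 2))
    (hℓ : ∀ (s : S) (w : FreeMonoid S),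
      ℓ s (lp.single 2 w (1 : ℝ)) = lp.single 2 (FreeMonoid.of s * w) (1 : ℝ)) :
    (∀ G : FreeAlgebra ℝ S, G ≠ 0 →
      (FreeAlgebra.lift ℝ (fun s => ℓ s + ContinuousLinearMap.adjoint (ℓ s))) G
        (lp.single 2 (1 : FreeMonoid S) (1 : ℝ)) ≠ 0) ∧
    Function.Injective
      (FreeAlgebra.lift ℝ (fun s => ℓ s + ContinuousLinearMap.adjoint (ℓ s))) := by
  classical
  set φ : FreeAlgebra ℝ S →ₐ[ℝ] _ :=
    FreeAlgebra.lift ℝ (fun s => ℓ s + ContinuousLinearMap.adjoint (ℓ s)) with hφdef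
  set δ : FreeMonoid S → lp (fun _ : FreeMonoid S => ℝ) 2 :=
    fun u => lp.single 2 u (1 : ℝ) with hδdef
  set ψ : FreeMonoid S →* (lp (fun _ : FreeMonoid S => ℝ) 2 →L[ℝ] lp (fun _ : FreeMonoid S => ℝ) 2) :=
    FreeMonoid.lift (fun s => ℓ s + ContinuousLinearMap.adjoint (ℓ s)) with hψdef
  -- coordinates via inner products
  have coord : ∀ (x : lp (fun _ : FreeMonoid S => ℝ) 2) (u : FreeMonoid S),
      x u = ⟪δ u, x⟫ := by
    intro x u
    rw [hδdef, lp.inner_single_left]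
    simp [RCLike.inner_apply]
  have cons_inj : ∀ (s : S) (v v' : FreeMonoid S),
      FreeMonoid.of s * v = FreeMonoid.of s * v' → v = v' := by
    intro s v v' h
    have := congrArg FreeMonoid.toList h
    simpa [FreeMonoid.toList_of_mul] using this
  have δapp : ∀ (u v : FreeMonoid S), (δ u) v = if v = u then (1:ℝ) else 0 := by
    intro u v
    by_cases h : v = u
    · subst h; rw [if_pos rfl, hδdef]; exact lp.single_apply_self 2 v 1
    · rw [if_neg h, hδdef]; exact lp.single_apply_ne 2 u 1 h
  -- adjoint coordinates
  have hadj : ∀ (s : S) (x : lp (fun _ : FreeMonoid S => ℝ) 2) (v : FreeMonoid S),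
      (ContinuousLinearMap.adjoint (ℓ s) x) v = x (FreeMonoid.of s * v) := by
    intro s x v
    rw [coord, ContinuousLinearMap.adjoint_inner_right, hℓ]
    exact (coord x _).symm
  -- adjoint on basis vectors
  have hadjδ₁ : ∀ (s : S) (v : FreeMonoid S),
      ContinuousLinearMap.adjoint (ℓ s) (δ (FreeMonoid.of s * v)) = δ v := by
    intro s v
    apply lp.ext
    funext v'
    rw [hadj, δapp, δapp]
    by_cases h : v' = v
    · subst h; rw [if_pos rfl, if_pos rfl]
    · rw [if_neg h, if_neg]
      intro hc
      exact h (cons_inj s v' v hc)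
  have hadjδ₂ : ∀ (s : S) (u : FreeMonoid S), (∀ v, u ≠ FreeMonoid.of s * v) →
      ContinuousLinearMap.adjoint (ℓ s) (δ u) = 0 := by
    intro s u hu
    apply lp.ext
    funext v
    rw [hadj, δapp]
    simp only [lp.coeFn_zero, Pi.zero_apply]
    rw [if_neg]
    exact fun hc => hu v hc.symm
  -- creation operator coordinates
  have hcr₁ : ∀ (s : S) (x : lp (fun _ : FreeMonoid S => ℝ) 2) (v : FreeMonoid S),
      (ℓ s x) (FreeMonoid.of s * v) = x v := by
    intro s x v
    rw [coord, ← ContinuousLinearMap.adjoint_inner_left, hadjδ₁, ← coord]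
  have hcr₂ : ∀ (s : S) (x : lp (fun _ : FreeMonoid S => ℝ) 2) (u : FreeMonoid S),
      (∀ v, u ≠ FreeMonoid.of s * v) → (ℓ s x) u = 0 := by
    intro s x u hu
    rw [coord, ← ContinuousLinearMap.adjoint_inner_left, hadjδ₂ s u hu, inner_zero_left]
  -- key lemma
  have key : ∀ (w v : FreeMonoid S), w.length ≤ v.length →
      (ψ w (δ 1)) v = if v = w then (1 : ℝ) else 0 := by
    intro w
    induction w using FreeMonoid.recOn with
    | one =>
      intro v _
      simp only [map_one, ContinuousLinearMap.one_apply]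
      rw [δapp]
    | of_mul s w' IH =>
      intro v hv
      rw [map_mul, ContinuousLinearMap.mul_apply, FreeMonoid.lift_eval_of,
        ContinuousLinearMap.add_apply, lp.coeFn_add, Pi.add_apply]
      have hlen : (FreeMonoid.of s * w').length = w'.length + 1 := by
        rw [FreeMonoid.length_mul, FreeMonoid.length_of]; omega
      have hadjterm : (ContinuousLinearMap.adjoint (ℓ s) (ψ w' (δ 1))) v = 0 := by
        rw [hadj, IH (FreeMonoid.of s * v) (by rw [FreeMonoid.length_mul, FreeMonoid.length_of]; omega),
          if_neg]
        intro hc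
        have := congrArg FreeMonoid.length hc
        rw [FreeMonoid.length_mul, FreeMonoid.length_of] at this
        omega
      rw [hadjterm, add_zero]
      by_cases h : ∃ v', v = FreeMonoid.of s * v'
      · obtain ⟨v', rfl⟩ := h
        rw [hcr₁, IH v' (by simp only [FreeMonoid.length_mul, FreeMonoid.length_of] at hv; omega)]
        by_cases h' : v' = w'
        · subst h'; simp
        · rw [if_neg h', if_neg]
          intro hc
          exact h' (cons_inj s v' w' hc)
      · push_neg at h
        rw [hcr₂ s _ v h, if_neg]
        intro hc
        exact (h w') hc
  -- the algebra side
  set e : FreeAlgebra ℝ S ≃ₐ[ℝ] MonoidAlgebra ℝ (FreeMonoid S) :=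
    FreeAlgebra.equivMonoidAlgebraFreeMonoid with hedef
  have hsingle1 : ∀ w : FreeMonoid S,
      φ (e.symm (MonoidAlgebra.single w (1:ℝ))) = ψ w := by
    intro w
    induction w using FreeMonoid.recOn with
    | one =>
      rw [← MonoidAlgebra.one_def, map_one, map_one, map_one]
    | of_mul s w' IH =>
      have : MonoidAlgebra.single (FreeMonoid.of s * w') (1:ℝ) =
          MonoidAlgebra.single (FreeMonoid.of s) (1:ℝ) * MonoidAlgebra.single w' (1:ℝ) := by
        rw [MonoidAlgebra.single_mul_single, one_mul]
      rw [this, map_mul, map_mul, map_mul, IH, FreeMonoid.lift_eval_of]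
      congr 1
      have he : e (FreeAlgebra.ι ℝ s) = MonoidAlgebra.single (FreeMonoid.of s) (1:ℝ) := by
        rw [hedef]
        simp [FreeAlgebra.equivMonoidAlgebraFreeMonoid, MonoidAlgebra.of_apply]
      rw [← he, e.symm_apply_apply, hφdef, FreeAlgebra.lift_ι_apply]
  have hsingle : ∀ (w : FreeMonoid S) (r : ℝ),
      φ (e.symm (MonoidAlgebra.single w r)) = r • ψ w := by
    intro w r
    have : MonoidAlgebra.single w r = r • MonoidAlgebra.single w (1:ℝ) := by
      rw [MonoidAlgebra.smul_single, smul_eq_mul, mul_one]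
    rw [this, map_smul, map_smul, hsingle1]
  -- main claim
  have main : ∀ G : FreeAlgebra ℝ S, G ≠ 0 → φ G (δ 1) ≠ 0 := by
    intro G hG
    set F : MonoidAlgebra ℝ (FreeMonoid S) := e G with hFdef
    have hF : F ≠ 0 := fun h => hG (by rw [← e.symm_apply_apply G, ← hFdef, h, map_zero])
    have hGF : φ G = F.coeff.sum fun w r => r • ψ w := by
      conv_lhs => rw [← e.symm_apply_apply G, ← hFdef]
      conv_lhs => rw [← F.sum_single]
      rw [map_finsuppSum, map_finsuppSum]
      exact Finsupp.sum_congr fun w _ => hsingle w (F.coeff w)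
    obtain ⟨w₀, hw₀mem, hw₀max⟩ :=
      Finset.exists_max_image F.coeff.support FreeMonoid.length (Finsupp.support_nonempty_iff.mpr (MonoidAlgebra.coeff_eq_zero.not.mpr hF))
    intro hzero
    have : (φ G (δ 1)) w₀ = F.coeff w₀ := by
      rw [hGF, Finsupp.sum]
      rw [ContinuousLinearMap.sum_apply]
      rw [lp.coeFn_sum, Finset.sum_apply]
      have : ∀ w ∈ F.coeff.support,
          ((F.coeff w • ψ w) (δ 1)) w₀ = if w₀ = w then F.coeff w else 0 := by
        intro w hw
        rw [ContinuousLinearMap.smul_apply, lp.coeFn_smul, Pi.smul_apply,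
          key w w₀ (hw₀max w hw), smul_eq_mul, mul_ite, mul_one, mul_zero]
      rw [Finset.sum_congr rfl this, Finset.sum_ite_eq F.coeff.support w₀ (fun w => F.coeff w), if_pos hw₀mem]
    rw [hzero] at this
    simp only [lp.coeFn_zero, Pi.zero_apply] at this
    exact Finsupp.mem_support_iff.mp hw₀mem this.symm
  refine ⟨main, ?_⟩
  intro a b hab
  by_contra hne
  have h1 : a - b ≠ 0 := sub_ne_zero_of_ne hne
  have h2 : φ (a - b) = 0 := by rw [map_sub, hab, sub_self]
  exact main (a - b) h1 (by rw [h2]; simp)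
end

section
/- Let A be a C*-algebra, let e, f ∈ A be self-adjoint idempotents with e·f = 0, and let x ∈ A be self-adjoint with e·x + x·e = x and f·x + x·f = x (i.e. e ∘ x = f ∘ x = (1/2)x for the Jordan product). Then x² = e·x²·e + f·x²·f, and ‖e·x²·e‖ = ‖f·x²·f‖ = ‖x‖². -/
private lemma peirce_aux_le {s M : ℝ} (hM : 0 ≤ M)
    (h : ∀ n : ℕ, s ^ (2 ^ n) ≤ 2 * M ^ (2 ^ n)) : s ≤ M := by
  by_contra hc
  push_neg at hc
  rcases eq_or_lt_of_le hM with h0 | h0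
  · have h1 := h 0
    simp only [pow_zero, pow_one] at h1
    rw [← h0] at h1
    nlinarith
  · set r := s / M with hr_def
    have hr : 1 < r := (one_lt_div h0).mpr hc
    obtain ⟨n, hn⟩ := pow_unbounded_of_one_lt (2 : ℝ) hr
    have hMp : 0 < M ^ (2 ^ n) := pow_pos h0 _
    have h2 : r ^ (2 ^ n) ≤ 2 := by
      rw [hr_def, div_pow, div_le_iff₀ hMp]
      exact h n
    have h3 : r ^ n ≤ r ^ (2 ^ n) :=
      pow_le_pow_right₀ hr.le (Nat.le_of_lt (Nat.lt_two_pow_self (n := n)))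
    linarith

/-- For orthogonal self-adjoint elements of a C*-algebra, `‖a + b‖ ≤ max ‖a‖ ‖b‖`. -/
private lemma peirce_norm_add_le {A : Type*} [NonUnitalNormedRing A] [StarRing A] [CStarRing A]
    (a b : A) (ha : IsSelfAdjoint a) (hb : IsSelfAdjoint b)
    (hab : a * b = 0) (hba : b * a = 0) : ‖a + b‖ ≤ max ‖a‖ ‖b‖ := by
  set g : A → A := fun z => z * z with hg
  -- squaring preserves selfadjointness and squares the norm
  have norm_iter : ∀ (z : A), IsSelfAdjoint z → ∀ n : ℕ,
      IsSelfAdjoint (g^[n] z) ∧ ‖g^[n] z‖ = ‖z‖ ^ (2 ^ n) := by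
    intro z hz n
    induction n with
    | zero => simpa using hz
    | succ n ih =>
      obtain ⟨ih1, ih2⟩ := ih
      constructor
      · rw [Function.iterate_succ_apply']
        show IsSelfAdjoint (g^[n] z * g^[n] z)
        rw [IsSelfAdjoint, star_mul, ih1.star_eq]
      · rw [Function.iterate_succ_apply']
        show ‖g^[n] z * g^[n] z‖ = ‖z‖ ^ (2 ^ (n + 1))
        have hnn := CStarRing.norm_star_mul_self (x := g^[n] z)
        rw [ih1.star_eq] at hnn
        rw [hnn, ih2, pow_succ, pow_mul]
        ring
  -- iterated squares of a+b split
  have key : ∀ n : ℕ, g^[n] (a + b) = g^[n] a + g^[n] b ∧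
      (g^[n] a) * (g^[n] b) = 0 ∧ (g^[n] b) * (g^[n] a) = 0 := by
    intro n
    induction n with
    | zero => exact ⟨rfl, hab, hba⟩
    | succ n ih =>
      obtain ⟨h1, h2, h3⟩ := ih
      set u := g^[n] a with hu
      set v := g^[n] b with hv
      have e1 : g^[n+1] (a + b) = g^[n+1] a + g^[n+1] b := by
        rw [Function.iterate_succ_apply', Function.iterate_succ_apply',
          Function.iterate_succ_apply', h1]
        show (u + v) * (u + v) = u * u + v * v
        rw [add_mul, mul_add, mul_add, h2, h3]
        abel
      have e2 : (g^[n+1] a) * (g^[n+1] b) = 0 := by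
        rw [Function.iterate_succ_apply', Function.iterate_succ_apply']
        show (u * u) * (v * v) = 0
        rw [mul_assoc, ← mul_assoc u v, h2, zero_mul, mul_zero]
      have e3 : (g^[n+1] b) * (g^[n+1] a) = 0 := by
        rw [Function.iterate_succ_apply', Function.iterate_succ_apply']
        show (v * v) * (u * u) = 0
        rw [mul_assoc, ← mul_assoc v u, h3, zero_mul, mul_zero]
      exact ⟨e1, e2, e3⟩
  set M := max ‖a‖ ‖b‖ with hM
  have hM0 : 0 ≤ M := le_max_of_le_left (norm_nonneg a)
  have hab_sa : IsSelfAdjoint (a + b) := ha.add hb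
  apply peirce_aux_le hM0
  intro n
  have h1 := (norm_iter (a + b) hab_sa n).2
  have h2 := (norm_iter a ha n).2
  have h3 := (norm_iter b hb n).2
  calc ‖a + b‖ ^ (2 ^ n) = ‖g^[n] (a + b)‖ := h1.symm
    _ = ‖g^[n] a + g^[n] b‖ := by rw [(key n).1]
    _ ≤ ‖g^[n] a‖ + ‖g^[n] b‖ := norm_add_le _ _
    _ = ‖a‖ ^ (2 ^ n) + ‖b‖ ^ (2 ^ n) := by rw [h2, h3]
    _ ≤ M ^ (2 ^ n) + M ^ (2 ^ n) := by
        gcongr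
        · exact le_max_left _ _
        · exact le_max_right _ _
    _ = 2 * M ^ (2 ^ n) := by ring

/-- Peirce-½ lemma in a C*-algebra: if `e, f` are orthogonal self-adjoint idempotents and
`x` is self-adjoint with `e ∘ x = f ∘ x = ½ x` (i.e. `ex + xe = x` and `fx + xf = x`),
then `x² = e x² e + f x² f` and `‖e x² e‖ = ‖f x² f‖ = ‖x‖²`. -/
theorem peirce_half_lemma
    {A : Type*} [NonUnitalNormedRing A] [StarRing A] [CStarRing A] [CompleteSpace A]
    (e f x : A)
    (he : IsSelfAdjoint e) (he2 : e * e = e)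
    (hf : IsSelfAdjoint f) (hf2 : f * f = f)
    (hef : e * f = 0)
    (hx : IsSelfAdjoint x)
    (hex : e * x + x * e = x) (hfx : f * x + x * f = x) :
    x * x = e * (x * x) * e + f * (x * x) * f ∧
    ‖e * (x * x) * e‖ = ‖x‖ ^ 2 ∧ ‖f * (x * x) * f‖ = ‖x‖ ^ 2 := by
  have hfe : f * e = 0 := by
    have := congrArg star hef
    simpa [star_mul, he.star_eq, hf.star_eq] using this
  -- e*x*f = x*f
  have h1 : e * x * f = x * f := by
    have := congrArg (· * f) hex
    simpa [add_mul, mul_assoc, hef] using this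
  -- e*(x*f) = e*x
  have h2 : e * (x * f) = e * x := by
    have := congrArg (e * ·) hfx
    simpa [mul_add, ← mul_assoc, hef] using this
  have hxf : x * f = e * x := by rw [← h2, ← mul_assoc, h1]
  -- f*x*e = x*e
  have h3 : f * x * e = x * e := by
    have := congrArg (· * e) hfx
    simpa [add_mul, mul_assoc, hfe] using this
  -- f*(x*e) = f*x
  have h4 : f * (x * e) = f * x := by
    have := congrArg (f * ·) hex
    simpa [mul_add, ← mul_assoc, hfe] using this
  have hxe : x * e = f * x := by rw [← h4, ← mul_assoc, h3]
  -- main decomposition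
  have hsum_l : e * x + f * x = x := by rw [← hxe]; exact hex
  have hsum_r : x * e + x * f = x := by rw [hxe]; exact hfx
  have cross1 : (e * x) * (x * f) = 0 := by
    calc (e * x) * (x * f) = (e * x) * (e * x) := by rw [hxf]
      _ = e * ((x * e) * x) := by simp only [mul_assoc]
      _ = e * ((f * x) * x) := by rw [hxe]
      _ = (e * f) * (x * x) := by simp only [mul_assoc]
      _ = 0 := by rw [hef, zero_mul]
  have cross2 : (f * x) * (x * e) = 0 := by
    calc (f * x) * (x * e) = (f * x) * (f * x) := by rw [hxe]
      _ = f * ((x * f) * x) := by simp only [mul_assoc]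
      _ = f * ((e * x) * x) := by rw [hxf]
      _ = (f * e) * (x * x) := by simp only [mul_assoc]
      _ = 0 := by rw [hfe, zero_mul]
  have main1 : (e * x) * (x * e) = e * (x * x) * e := by simp only [mul_assoc]
  have main2 : (f * x) * (x * f) = f * (x * x) * f := by simp only [mul_assoc]
  have hdec : x * x = e * (x * x) * e + f * (x * x) * f := by
    calc x * x = (e * x + f * x) * (x * e + x * f) := by rw [hsum_l, hsum_r]
      _ = (e * x) * (x * e) + (e * x) * (x * f) + ((f * x) * (x * e) + (f * x) * (x * f)) := by
          rw [add_mul, mul_add, mul_add]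
      _ = e * (x * x) * e + f * (x * x) * f := by
          rw [cross1, cross2, main1, main2]; abel
  set a := e * (x * x) * e with ha_def
  set b := f * (x * x) * f with hb_def
  -- norms of a and b via C* identity
  have hsex : star (e * x) = x * e := by rw [star_mul, he.star_eq, hx.star_eq]
  have hsfx : star (f * x) = x * f := by rw [star_mul, hf.star_eq, hx.star_eq]
  have ha_form : a = (e * x) * star (e * x) := by
    rw [hsex, ha_def]; simp only [mul_assoc]
  have hb_form : b = (f * x) * star (f * x) := by
    rw [hsfx, hb_def]; simp only [mul_assoc]
  have ha_form2 : a = star (f * x) * (f * x) := by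
    rw [hsfx, ha_def, hxf, ← hxe]; simp only [mul_assoc]
  have hna2 : ‖a‖ = ‖f * x‖ * ‖f * x‖ := by rw [ha_form2]; exact CStarRing.norm_star_mul_self
  have hnb : ‖b‖ = ‖f * x‖ * ‖f * x‖ := by rw [hb_form]; exact CStarRing.norm_self_mul_star
  have hab_norm : ‖a‖ = ‖b‖ := by rw [hna2, hnb]
  -- selfadjointness of a and b
  have ha_sa : IsSelfAdjoint a := by
    rw [ha_form]; exact IsSelfAdjoint.mul_star_self (e * x)
  have hb_sa : IsSelfAdjoint b := by
    rw [hb_form]; exact IsSelfAdjoint.mul_star_self (f * x)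
  -- orthogonality of a and b
  have hab0 : a * b = 0 := by
    rw [ha_def, hb_def]
    calc e * (x * x) * e * (f * (x * x) * f)
        = e * ((x * x) * ((e * f) * ((x * x) * f))) := by simp only [mul_assoc]
      _ = 0 := by rw [hef, zero_mul, mul_zero, mul_zero]
  have hba0 : b * a = 0 := by
    rw [ha_def, hb_def]
    calc f * (x * x) * f * (e * (x * x) * e)
        = f * ((x * x) * ((f * e) * ((x * x) * e))) := by simp only [mul_assoc]
      _ = 0 := by rw [hfe, zero_mul, mul_zero, mul_zero]
  -- ‖x‖² = ‖x*x‖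
  have hxx : ‖x * x‖ = ‖x‖ ^ 2 := by
    have h := CStarRing.norm_star_mul_self (x := x)
    rw [hx.star_eq] at h
    rw [h, sq]
  -- ‖e‖ ≤ 1
  have hne : ‖e‖ ≤ 1 := by
    have h := CStarRing.norm_star_mul_self (x := e)
    rw [he.star_eq, he2] at h
    nlinarith [norm_nonneg e]
  -- ‖a‖ ≤ ‖x‖²
  have haux : ‖a‖ ≤ ‖x‖ ^ 2 := by
    have s2 : ‖e * (x * x)‖ ≤ ‖e‖ * ‖x * x‖ := norm_mul_le _ _
    have h0 : (0:ℝ) ≤ ‖x * x‖ := norm_nonneg _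
    have h1 : (0:ℝ) ≤ ‖e‖ := norm_nonneg _
    calc ‖a‖ ≤ ‖e * (x * x)‖ * ‖e‖ := norm_mul_le _ _
      _ ≤ (‖e‖ * ‖x * x‖) * ‖e‖ := mul_le_mul_of_nonneg_right s2 h1
      _ ≤ (1 * ‖x * x‖) * 1 :=
          mul_le_mul (mul_le_mul_of_nonneg_right hne h0) hne h1 (by positivity)
      _ = ‖x‖ ^ 2 := by rw [one_mul, mul_one, hxx]
  -- ‖x‖² ≤ ‖a‖
  have hxa : ‖x‖ ^ 2 ≤ ‖a‖ := by
    have h := peirce_norm_add_le a b ha_sa hb_sa hab0 hba0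
    rw [← hab_norm, max_self] at h
    rw [← hxx, hdec]
    exact h
  have hfinal : ‖a‖ = ‖x‖ ^ 2 := le_antisymm haux hxa
  exact ⟨hdec, hfinal, by rw [← hab_norm]; exact hfinal⟩
end

section
/- Let A := C([0,1], M₂(ℝ)) be the Banach algebra of continuous functions from [0,1] to real 2×2 matrices with the supremum norm, and define p₁, p₂ ∈ A by p₁(t) := [[1,0],[0,0]] and p₂(t) := [[t, √(t(1−t))],[√(t(1−t)), 1−t]]. Let J := {f ∈ A : f(t) is a symmetric matrix for every t ∈ [0,1], and f(0) and f(1) are diagonal matrices}. Then J equals the smallest norm-closed real-linear subspace of A that contains the constant function 1, p₁ and p₂ and is closed under the Jordan product f ∘ g := (1/2)(f·g + g·f). -/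
open scoped Matrix

abbrev RSK : Set ℝ := Set.Icc (0:ℝ) 1
abbrev RSM := Matrix (Fin 2) (Fin 2) ℝ

lemma RS.cont_fin_two {X : Type*} [TopologicalSpace X] {a b c d : X → ℝ}
    (ha : Continuous a) (hb : Continuous b) (hc : Continuous c) (hd : Continuous d) :
    Continuous fun x => (!![a x, b x; c x, d x] : RSM) := by
  apply continuous_matrix
  intro i j
  fin_cases i <;> fin_cases j <;> simp <;> assumption

noncomputable def RS.dgA : C(ℝ, RSM) :=
  ⟨fun r => !![r,0;0,0], RS.cont_fin_two continuous_id continuous_const continuous_const continuous_const⟩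
noncomputable def RS.dgB : C(ℝ, RSM) :=
  ⟨fun r => !![0,0;0,r], RS.cont_fin_two continuous_const continuous_const continuous_const continuous_id⟩
noncomputable def RS.offC : C(ℝ, RSM) :=
  ⟨fun r => !![0,r;r,0], RS.cont_fin_two continuous_const continuous_id continuous_id continuous_const⟩

noncomputable def RS.sqt : C(RSK, ℝ) :=
  ⟨fun t => Real.sqrt ((t:ℝ) * (1 - (t:ℝ))), by fun_prop⟩

lemma RS.mem_of_closed (S : Set C(RSK, ℝ)) (hS : IsClosed S)
    (hconst : ∀ r : ℝ, ContinuousMap.const RSK r ∈ S)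
    (hid : ContinuousMap.restrict RSK (ContinuousMap.id ℝ) ∈ S)
    (hadd : ∀ f ∈ S, ∀ g ∈ S, f + g ∈ S)
    (hmul : ∀ f ∈ S, ∀ g ∈ S, f * g ∈ S) (f : C(RSK, ℝ)) : f ∈ S := by
  induction f using ContinuousMap.induction_on with
  | const r => exact hconst r
  | id => exact hid
  | star_id =>
      have : star (ContinuousMap.restrict RSK (ContinuousMap.id ℝ))
          = ContinuousMap.restrict RSK (ContinuousMap.id ℝ) := by ext x; simp
      rw [this]; exact hid
  | add f g hf hg => exact hadd f hf g hg
  | mul f g hf hg => exact hmul f hf g hg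
  | closure h f =>
      have h2 := polynomialFunctions.starClosure_topologicalClosure RSK
      have h3 : closure (((polynomialFunctions RSK).starClosure : StarSubalgebra ℝ C(RSK,ℝ)) : Set C(RSK,ℝ)) = Set.univ := by
        rw [← StarSubalgebra.topologicalClosure_coe, h2]; rfl
      have hf : f ∈ closure (((polynomialFunctions RSK).starClosure : StarSubalgebra ℝ C(RSK,ℝ)) : Set C(RSK,ℝ)) := by
        rw [h3]; trivial
      exact (hS.closure_subset_iff.mpr (fun g hg => h g hg)) hf

set_option maxHeartbeats 2000000 in
lemma RS.hard (p₁ p₂ : C(RSK, RSM))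
    (hp₁ : ∀ t : RSK, p₁ t = !![1, 0; 0, 0])
    (hp₂ : ∀ t : RSK, p₂ t = !![(t : ℝ), Real.sqrt ((t : ℝ) * (1 - (t : ℝ)));
                Real.sqrt ((t : ℝ) * (1 - (t : ℝ))), 1 - (t : ℝ)])
    (D : Set C(RSK, RSM)) (hcl : IsClosed D)
    (hadd : ∀ f ∈ D, ∀ g ∈ D, f + g ∈ D)
    (hsmul : ∀ r : ℝ, ∀ f ∈ D, r • f ∈ D)
    (hj : ∀ f ∈ D, ∀ g ∈ D, (2:ℝ)⁻¹ • (f * g + g * f) ∈ D)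
    (h1 : (1 : C(RSK, RSM)) ∈ D) (hP1 : p₁ ∈ D) (hP2 : p₂ ∈ D)
    (e₀ e₁ : RSK) (he₀ : (e₀ : ℝ) = 0) (he₁ : (e₁ : ℝ) = 1)
    (f : C(RSK, RSM)) (hsym : ∀ t, (f t).IsSymm)
    (hc0 : f e₀ 0 1 = 0) (hc1 : f e₁ 0 1 = 0) : f ∈ D := by
  have hsub : ∀ g ∈ D, ∀ h ∈ D, g - h ∈ D := by
    intro g hg h hh
    have := hadd g hg _ (hsmul (-1) h hh)
    simpa [sub_eq_add_neg] using this
  set x : C(RSK, RSM) := (2:ℝ)⁻¹ • (p₁ * p₂ + p₂ * p₁) with hxdef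
  have hxD : x ∈ D := hj p₁ hP1 p₂ hP2
  have hx : ∀ t : RSK, x t = !![(t:ℝ), RS.sqt t / 2; RS.sqt t / 2, 0] := by
    intro t
    ext i j
    fin_cases i <;> fin_cases j <;>
      simp [hxdef, hp₁ t, hp₂ t, RS.sqt, Matrix.mul_apply, Fin.sum_univ_two] <;> ring
  -- T1 = diag(t, 0)
  set T1 : C(RSK, RSM) := (2:ℝ) • ((2:ℝ)⁻¹ • (p₁ * x + x * p₁)) - x with hT1def
  have hT1D : T1 ∈ D := hsub _ (hsmul 2 _ (hj p₁ hP1 x hxD)) x hxD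
  have hT1 : ∀ t : RSK, T1 t = !![(t:ℝ), 0; 0, 0] := by
    intro t
    ext i j
    fin_cases i <;> fin_cases j <;>
      simp [hT1def, hx t, hp₁ t, Matrix.mul_apply, Fin.sum_univ_two] <;> ring
  -- step A
  have hA : ∀ a : C(RSK, ℝ), RS.dgA.comp a ∈ D := by
    apply RS.mem_of_closed ((fun a => RS.dgA.comp a) ⁻¹' D)
    · exact IsClosed.preimage (ContinuousMap.continuous_postcomp RS.dgA) hcl
    · intro r
      have : RS.dgA.comp (ContinuousMap.const RSK r) = r • p₁ := by
        ext t i j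
        fin_cases i <;> fin_cases j <;> simp [RS.dgA, hp₁ t]
      simp only [Set.mem_preimage, this]
      exact hsmul r p₁ hP1
    · have : RS.dgA.comp (ContinuousMap.restrict RSK (ContinuousMap.id ℝ)) = T1 := by
        ext t i j
        fin_cases i <;> fin_cases j <;> simp [RS.dgA, hT1 t]
      simp only [Set.mem_preimage, this]
      exact hT1D
    · intro a ha b hb
      have : RS.dgA.comp (a + b) = RS.dgA.comp a + RS.dgA.comp b := by
        ext t i j
        fin_cases i <;> fin_cases j <;> simp [RS.dgA]
      simp only [Set.mem_preimage, this]
      exact hadd _ ha _ hb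
    · intro a ha b hb
      have : RS.dgA.comp (a * b)
          = (2:ℝ)⁻¹ • (RS.dgA.comp a * RS.dgA.comp b + RS.dgA.comp b * RS.dgA.comp a) := by
        ext t i j
        fin_cases i <;> fin_cases j <;>
          simp [RS.dgA, Matrix.mul_apply, Fin.sum_univ_two] <;> ring
      simp only [Set.mem_preimage, this]
      exact hj _ ha _ hb

  -- q = diag(0,1)
  set q : C(RSK, RSM) := (1 : C(RSK, RSM)) - p₁ with hqdef
  have hqD : q ∈ D := hsub _ h1 _ hP1
  have hq : ∀ t : RSK, q t = !![0, 0; 0, 1] := by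
    intro t
    ext i j
    fin_cases i <;> fin_cases j <;>
      simp [hqdef, hp₁ t, Matrix.one_apply]
  set x' : C(RSK, RSM) := (2:ℝ)⁻¹ • (q * p₂ + p₂ * q) with hx'def
  have hx'D : x' ∈ D := hj q hqD p₂ hP2
  have hx' : ∀ t : RSK, x' t = !![0, RS.sqt t / 2; RS.sqt t / 2, 1 - (t:ℝ)] := by
    intro t
    ext i j
    fin_cases i <;> fin_cases j <;>
      simp [hx'def, hq t, hp₂ t, RS.sqt, Matrix.mul_apply, Fin.sum_univ_two] <;> ring
  set T2 : C(RSK, RSM) := (2:ℝ) • ((2:ℝ)⁻¹ • (q * x' + x' * q)) - x' with hT2def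
  have hT2D : T2 ∈ D := hsub _ (hsmul 2 _ (hj q hqD x' hx'D)) x' hx'D
  have hT2 : ∀ t : RSK, T2 t = !![0, 0; 0, 1 - (t:ℝ)] := by
    intro t
    ext i j
    fin_cases i <;> fin_cases j <;>
      simp [hT2def, hx' t, hq t, Matrix.mul_apply, Fin.sum_univ_two] <;> ring
  -- step B
  have hB : ∀ b : C(RSK, ℝ), RS.dgB.comp b ∈ D := by
    apply RS.mem_of_closed ((fun b => RS.dgB.comp b) ⁻¹' D)
    · exact IsClosed.preimage (ContinuousMap.continuous_postcomp RS.dgB) hcl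
    · intro r
      have : RS.dgB.comp (ContinuousMap.const RSK r) = r • q := by
        ext t i j
        fin_cases i <;> fin_cases j <;> simp [RS.dgB, hq t]
      simp only [Set.mem_preimage, this]
      exact hsmul r q hqD
    · have : RS.dgB.comp (ContinuousMap.restrict RSK (ContinuousMap.id ℝ)) = q - T2 := by
        ext t i j
        fin_cases i <;> fin_cases j <;> simp [RS.dgB, hq t, hT2 t]
      simp only [Set.mem_preimage, this]
      exact hsub _ hqD _ hT2D
    · intro a ha b hb
      have : RS.dgB.comp (a + b) = RS.dgB.comp a + RS.dgB.comp b := by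
        ext t i j
        fin_cases i <;> fin_cases j <;> simp [RS.dgB]
      simp only [Set.mem_preimage, this]
      exact hadd _ ha _ hb
    · intro a ha b hb
      have : RS.dgB.comp (a * b)
          = (2:ℝ)⁻¹ • (RS.dgB.comp a * RS.dgB.comp b + RS.dgB.comp b * RS.dgB.comp a) := by
        ext t i j
        fin_cases i <;> fin_cases j <;>
          simp [RS.dgB, Matrix.mul_apply, Fin.sum_univ_two] <;> ring
      simp only [Set.mem_preimage, this]
      exact hj _ ha _ hb
  -- off-diagonal: sqt itself
  have hwD : RS.offC.comp RS.sqt ∈ D := by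
    have heq : RS.offC.comp RS.sqt
        = (2:ℝ) • (x - RS.dgA.comp (ContinuousMap.restrict RSK (ContinuousMap.id ℝ))) := by
      ext t i j
      fin_cases i <;> fin_cases j <;>
        simp [RS.offC, RS.dgA, hx t] <;> ring
    rw [heq]
    exact hsmul 2 _ (hsub _ hxD _ (hA _))
  -- multiplication stability for off-diagonal part
  have heff : ∀ a c : C(RSK, ℝ), RS.offC.comp c ∈ D → RS.offC.comp (a * c) ∈ D := by
    intro a c hc
    have hdiagD : RS.dgA.comp a + RS.dgB.comp a ∈ D := hadd _ (hA a) _ (hB a)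
    have heq : RS.offC.comp (a * c)
        = (2:ℝ)⁻¹ • ((RS.dgA.comp a + RS.dgB.comp a) * RS.offC.comp c
            + RS.offC.comp c * (RS.dgA.comp a + RS.dgB.comp a)) := by
      ext t i j
      fin_cases i <;> fin_cases j <;>
        simp [RS.offC, RS.dgA, RS.dgB, Matrix.mul_apply, Fin.sum_univ_two] <;> ring
    rw [heq]
    exact hj _ hdiagD _ hc
  -- any c vanishing at endpoints gives off-diagonal member
  have hC : ∀ c : C(RSK, ℝ), c e₀ = 0 → c e₁ = 0 → RS.offC.comp c ∈ D := by
    intro c hce0 hce1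
    have hSclosed : IsClosed ((fun c => RS.offC.comp c) ⁻¹' D) :=
      IsClosed.preimage (ContinuousMap.continuous_postcomp RS.offC) hcl
    have hIsub : ((Ideal.span {RS.sqt} : Ideal C(RSK, ℝ)) : Set C(RSK, ℝ)) ⊆
        (fun c => RS.offC.comp c) ⁻¹' D := by
      intro g hg
      obtain ⟨a, ha⟩ := Ideal.mem_span_singleton'.mp hg
      have := heff a RS.sqt hwD
      rw [ha] at this
      exact this
    have hccl : c ∈ (Ideal.span {RS.sqt} : Ideal C(RSK, ℝ)).closure := by
      rw [← ContinuousMap.idealOfSet_ofIdeal_eq_closure]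
      rw [ContinuousMap.mem_idealOfSet]
      intro t ht
      have hvan : ∀ g ∈ (Ideal.span {RS.sqt} : Ideal C(RSK, ℝ)), g t = 0 := by
        intro g hg
        exact ContinuousMap.notMem_setOfIdeal.mp ht hg
      have hs0 : RS.sqt t = 0 := hvan _ (Ideal.subset_span rfl)
      have hnn : (0:ℝ) ≤ (t:ℝ) * (1 - (t:ℝ)) := mul_nonneg t.2.1 (by linarith [t.2.2])
      have hzero : (t:ℝ) * (1 - (t:ℝ)) = 0 := (Real.sqrt_eq_zero hnn).mp hs0
      rcases mul_eq_zero.mp hzero with h | h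
      · have ht0 : t = e₀ := Subtype.ext (by rw [he₀, h])
        rw [ht0]; exact hce0
      · have ht1 : t = e₁ := Subtype.ext (by rw [he₁]; linarith)
        rw [ht1]; exact hce1
    have hcc : c ∈ closure ((Ideal.span {RS.sqt} : Ideal C(RSK, ℝ)) : Set C(RSK,ℝ)) := by
      rw [← Ideal.coe_closure]; exact hccl
    exact (hSclosed.closure_subset_iff.mpr hIsub) hcc
  -- decompose f
  have hfd : f = RS.dgA.comp ⟨fun t => f t 0 0, (map_continuous f).matrix_elem 0 0⟩
      + (RS.dgB.comp ⟨fun t => f t 1 1, (map_continuous f).matrix_elem 1 1⟩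
        + RS.offC.comp ⟨fun t => f t 0 1, (map_continuous f).matrix_elem 0 1⟩) := by
    ext t i j
    fin_cases i <;> fin_cases j <;>
      simp [RS.dgA, RS.dgB, RS.offC]
    exact (hsym t).apply 0 1
  rw [hfd]
  exact hadd _ (hA _) _ (hadd _ (hB _) _ (hC _ (by simpa using hc0) (by simpa using hc1)))

lemma RS.isSymm_fin_two {a b c : ℝ} : (!![a, c; c, b] : RSM).IsSymm :=
  Matrix.IsSymm.ext fun i j => by fin_cases i <;> fin_cases j <;> simp

set_option maxHeartbeats 1000000 in
/-- The Raeburn–Sinclair generation statement: in `A = C([0,1], M₂(ℝ))`, the set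
`J = {f : f(t) symmetric for all t, f(0) and f(1) diagonal}` equals the smallest
norm-closed real-linear subspace of `A` containing `1`, `p₁`, `p₂` and closed under
the Jordan product `f ∘ g = ½(fg + gf)`, where `p₁(t) = [[1,0],[0,0]]` and
`p₂(t) = [[t, √(t(1−t))],[√(t(1−t)), 1−t]]`. -/
theorem raeburn_sinclair_JB_generation
    (p₁ p₂ : C(Set.Icc (0:ℝ) 1, Matrix (Fin 2) (Fin 2) ℝ))
    (hp₁ : ∀ t : Set.Icc (0:ℝ) 1, p₁ t = !![1, 0; 0, 0])
    (hp₂ : ∀ t : Set.Icc (0:ℝ) 1,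
      p₂ t = !![(t : ℝ), Real.sqrt ((t : ℝ) * (1 - (t : ℝ)));
                Real.sqrt ((t : ℝ) * (1 - (t : ℝ))), 1 - (t : ℝ)]) :
    {f : C(Set.Icc (0:ℝ) 1, Matrix (Fin 2) (Fin 2) ℝ) |
        (∀ t, (f t).IsSymm) ∧
        ((f ⟨0, Set.left_mem_Icc.mpr zero_le_one⟩) 0 1 = 0 ∧
         (f ⟨0, Set.left_mem_Icc.mpr zero_le_one⟩) 1 0 = 0) ∧
        ((f ⟨1, Set.right_mem_Icc.mpr zero_le_one⟩) 0 1 = 0 ∧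
         (f ⟨1, Set.right_mem_Icc.mpr zero_le_one⟩) 1 0 = 0)} =
    ⋂₀ {D : Set C(Set.Icc (0:ℝ) 1, Matrix (Fin 2) (Fin 2) ℝ) |
        IsClosed D ∧
        (0 : C(Set.Icc (0:ℝ) 1, Matrix (Fin 2) (Fin 2) ℝ)) ∈ D ∧
        (∀ f ∈ D, ∀ g ∈ D, f + g ∈ D) ∧
        (∀ r : ℝ, ∀ f ∈ D, r • f ∈ D) ∧
        (∀ f ∈ D, ∀ g ∈ D, (2 : ℝ)⁻¹ • (f * g + g * f) ∈ D) ∧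
        (1 : C(Set.Icc (0:ℝ) 1, Matrix (Fin 2) (Fin 2) ℝ)) ∈ D ∧
        p₁ ∈ D ∧ p₂ ∈ D} := by
  apply Set.Subset.antisymm
  · intro f hf
    apply Set.mem_sInter.mpr
    rintro D ⟨hcl, h0, hadd, hsmul, hj, h1, hP1, hP2⟩
    exact RS.hard p₁ p₂ hp₁ hp₂ D hcl hadd hsmul hj h1 hP1 hP2
      ⟨0, Set.left_mem_Icc.mpr zero_le_one⟩ ⟨1, Set.right_mem_Icc.mpr zero_le_one⟩
      rfl rfl f hf.1 hf.2.1.1 hf.2.2.1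
  · apply Set.sInter_subset_of_mem
    set e₀ : RSK := ⟨0, Set.left_mem_Icc.mpr zero_le_one⟩
    set e₁ : RSK := ⟨1, Set.right_mem_Icc.mpr zero_le_one⟩
    refine ⟨?_, ?_, ?_, ?_, ?_, ?_, ?_, ?_⟩
    · -- closedness of J
      have h1 : IsClosed {f : C(RSK, RSM) | ∀ t, (f t).IsSymm} := by
        have : {f : C(RSK, RSM) | ∀ t, (f t).IsSymm} = ⋂ t, {f | (f t)ᵀ = f t} := by
          ext f; simp [Matrix.IsSymm]
        rw [this]
        exact isClosed_iInter fun t =>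
          isClosed_eq ((continuous_eval_const t).matrix_transpose)
            (continuous_eval_const t)
      have h2 : ∀ (t₀ : RSK) (i j : Fin 2), IsClosed {f : C(RSK, RSM) | f t₀ i j = 0} :=
        fun t₀ i j => isClosed_eq ((continuous_eval_const t₀).matrix_elem i j)
          continuous_const
      simp only [Set.setOf_and]
      exact h1.inter (((h2 e₀ 0 1).inter (h2 e₀ 1 0)).inter ((h2 e₁ 0 1).inter (h2 e₁ 1 0)))
    · refine ⟨fun t => by simp [Matrix.isSymm_zero], by simp, by simp⟩
    · rintro f ⟨hfs, hf0, hf1⟩ g ⟨hgs, hg0, hg1⟩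
      refine ⟨fun t => by simpa using (hfs t).add (hgs t), ?_, ?_⟩
      · constructor <;> simp [hf0.1, hf0.2, hg0.1, hg0.2]
      · constructor <;> simp [hf1.1, hf1.2, hg1.1, hg1.2]
    · rintro r f ⟨hfs, hf0, hf1⟩
      refine ⟨fun t => ?_, ?_, ?_⟩
      · have : (r • f) t = r • f t := rfl
        rw [this, Matrix.IsSymm, Matrix.transpose_smul, (hfs t).eq]
      · constructor <;> simp [hf0.1, hf0.2]
      · constructor <;> simp [hf1.1, hf1.2]
    · rintro f ⟨hfs, hf0, hf1⟩ g ⟨hgs, hg0, hg1⟩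
      refine ⟨fun t => ?_, ?_, ?_⟩
      · have : ((2:ℝ)⁻¹ • (f * g + g * f)) t = (2:ℝ)⁻¹ • (f t * g t + g t * f t) := rfl
        rw [this, Matrix.IsSymm, Matrix.transpose_smul, Matrix.transpose_add,
          Matrix.transpose_mul, Matrix.transpose_mul, (hfs t).eq, (hgs t).eq, add_comm]
      · constructor <;>
          simp [Matrix.smul_apply, Matrix.add_apply, Matrix.mul_apply, Fin.sum_univ_two,
            hf0.1, hf0.2, hg0.1, hg0.2]
      · constructor <;>
          simp [Matrix.smul_apply, Matrix.add_apply, Matrix.mul_apply, Fin.sum_univ_two,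
            hf1.1, hf1.2, hg1.1, hg1.2]
    · refine ⟨fun t => by simpa using Matrix.isSymm_one, ?_, ?_⟩ <;>
        constructor <;> simp [Matrix.one_apply]
    · refine ⟨fun t => by rw [hp₁ t]; exact RS.isSymm_fin_two, ?_, ?_⟩ <;>
        constructor <;> simp [hp₁]
    · refine ⟨fun t => by rw [hp₂ t]; exact RS.isSymm_fin_two, ?_, ?_⟩ <;>
        constructor <;> simp [hp₂, e₀, e₁] <;> norm_num
end
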